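/- Let ⪯ be a monomial order on ℤ[B_{i,j}] with the property that every monomial divisible by some diagonal variable B_{m,m} is strictly greater than every monomial involving only off-diagonal variables B_{i,j} (i ≠ j), and let I be the ideal generated by 1 + C_{1,1}, …, 1 + C_{q,q}. Then for every n the leading monomial of 1 + C_{n,n} with respect to ⪯ is B_{n,n}, and the leading monomial of every nonzero element of I is divisible by B_{n,n} for some n; that is, the polynomials 1 + C_{n,n}, n = 1, …, q, form a Gröbner basis of I with respect to ⪯. -/

import Mathlib

open scoped BigOperators

/-- A finite sequence of positive integers is *admissible* if between any two
occurrences of a number `s` there is an entry greater than `s`. -/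
def IsAdmissible (l : List ℕ) : Prop :=
  ∀ (l₁ l₂ l₃ : List ℕ) (s : ℕ), l = l₁ ++ s :: (l₂ ++ s :: l₃) → ∃ t ∈ l₂, s < t

/-- `Dset n` is the set of admissible sequences all of whose entries lie in
`{1, …, n-1}` (including the empty sequence). -/
def Dset (n : ℕ) : Set (List ℕ) :=
  {l | IsAdmissible l ∧ ∀ x ∈ l, 1 ≤ x ∧ x < n}

/-- The product `B i i₁ * B i₁ i₂ * ⋯ * B i_c j` along a sequence `[i₁, …, i_c]`;
the empty sequence contributes `B i j`. -/
def pathProd {A : Type*} [Ring A] (B : ℕ → ℕ → A) (i j : ℕ) : List ℕ → A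
  | [] => B i j
  | a :: l => B i a * pathProd B a j l

/-- `M i j = Σ_{(i₁,…,i_c) ∈ D_{min(i,j)}} B i i₁ ⋯ B i_c j`. -/
noncomputable def Mpoly {A : Type*} [Ring A] (B : ℕ → ℕ → A) (i j : ℕ) : A :=
  ∑ᶠ l ∈ Dset (min i j), pathProd B i j l

/-- `C i j` for `i < j` sums `B i i₁ ⋯ B i_c j` over sequences with
`(i, i₁, …, i_c) ∈ D_j`; and `C n n = M n n`. -/
noncomputable def Cpoly {A : Type*} [Ring A] (B : ℕ → ℕ → A) (i j : ℕ) : A :=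
  if i = j then Mpoly B i j
  else ∑ᶠ l ∈ {l : List ℕ | (i :: l) ∈ Dset j}, pathProd B i j l

/-- The generators `B_{i,j}` of the free noncommutative unital ℤ-algebra. -/
noncomputable def Bgen : ℕ → ℕ → FreeAlgebra ℤ (ℕ × ℕ) :=
  fun i j => FreeAlgebra.ι ℤ (i, j)

/-- The commuting indeterminates `B_{i,j}` of the polynomial ring `ℤ[B_{i,j}]`. -/
noncomputable def Bcomm : ℕ → ℕ → MvPolynomial (ℕ × ℕ) ℤ :=
  fun i j => MvPolynomial.X (i, j)

/-! ### Auxiliary lemmas about admissible sequences -/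

lemma isAdmissible_nil : IsAdmissible [] := by
  intro l₁ l₂ l₃ s h
  exact absurd h (by simp)

lemma IsAdmissible.left {u v : List ℕ} (h : IsAdmissible (u ++ v)) : IsAdmissible u := by
  intro l₁ l₂ l₃ s hu
  exact h l₁ l₂ (l₃ ++ v) s (by subst hu; simp)

lemma IsAdmissible.right {u v : List ℕ} (h : IsAdmissible (u ++ v)) : IsAdmissible v := by
  intro l₁ l₂ l₃ s hv
  exact h (u ++ l₁) l₂ l₃ s (by subst hv; simp)

lemma IsAdmissible.tail {a : ℕ} {l : List ℕ} (h : IsAdmissible (a :: l)) : IsAdmissible l :=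
  IsAdmissible.right (u := [a]) h

lemma IsAdmissible.chain' : ∀ {l : List ℕ}, IsAdmissible l → l.Chain' (· ≠ ·)
  | [], _ => List.isChain_nil
  | [_], _ => List.isChain_singleton _
  | (a :: b :: t), h => by
    unfold List.Chain'
    rw [List.isChain_cons_cons]
    refine ⟨?_, (h.tail).chain'⟩
    rintro rfl
    obtain ⟨x, hx, -⟩ := h [] [] t a (by simp)
    exact absurd hx (List.not_mem_nil (a := x))

lemma IsAdmissible.length_lt : ∀ (n : ℕ) (l : List ℕ), IsAdmissible l →
    (∀ x ∈ l, x < n) → l.length < 2 ^ n := by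
  intro n
  induction n with
  | zero =>
    intro l _ hl
    cases l with
    | nil => simp
    | cons a t => exact absurd (hl a (by simp)) (Nat.not_lt_zero a)
  | succ n IH =>
    intro l hadm hl
    by_cases hn : n ∈ l
    · obtain ⟨l₁, l₂, rfl⟩ := List.append_of_mem hn
      have hn1 : n ∉ l₁ := by
        intro contra
        obtain ⟨u, w, rfl⟩ := List.append_of_mem contra
        obtain ⟨t, htw, hnt⟩ := hadm u w l₂ n (by simp)
        exact absurd (hl t (by simp [htw])) (by omega)
      have hn2 : n ∉ l₂ := by
        intro contra
        obtain ⟨u, w, rfl⟩ := List.append_of_mem contra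
        obtain ⟨t, htw, hnt⟩ := hadm l₁ u w n (by simp)
        exact absurd (hl t (by simp [htw])) (by omega)
      have h1 : l₁.length < 2 ^ n := by
        refine IH l₁ hadm.left fun x hx => ?_
        have := hl x (by simp [hx])
        have : x ≠ n := fun e => hn1 (e ▸ hx)
        omega
      have h2 : l₂.length < 2 ^ n := by
        refine IH l₂ (IsAdmissible.right (u := [n]) (IsAdmissible.right (u := l₁) hadm))
          fun x hx => ?_
        have := hl x (by simp [hx])
        have : x ≠ n := fun e => hn2 (e ▸ hx)
        omega
      have : (l₁ ++ n :: l₂).length = l₁.length + l₂.length + 1 := by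
        simp [List.length_append]; omega
      rw [this, pow_succ]
      omega
    · have h1 : l.length < 2 ^ n := by
        refine IH l hadm fun x hx => ?_
        have := hl x hx
        have : x ≠ n := fun e => hn (e ▸ hx)
        omega
      have : (2 : ℕ) ^ n ≤ 2 ^ (n + 1) := Nat.pow_le_pow_right (by norm_num) (Nat.le_succ n)
      omega

lemma Dset_finite (n : ℕ) : (Dset n).Finite := by
  classical
  refine ((List.finite_length_lt (Fin n) (2 ^ n)).image (List.map Fin.val)).subset ?_
  rintro l ⟨hadm, hmem⟩
  refine ⟨l.pmap (fun x h => (⟨x, h⟩ : Fin n)) (fun x hx => (hmem x hx).2), ?_, ?_⟩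
  · simpa using hadm.length_lt n l fun x hx => (hmem x hx).2
  · rw [List.map_pmap]
    simpa using (List.pmap_eq_map _ (fun x _ => x) l _).trans (List.map_id l)

lemma nil_mem_Dset (n : ℕ) : [] ∈ Dset n :=
  ⟨isAdmissible_nil, by simp⟩

/-! ### Off-diagonal support predicates -/

/-- A monomial is off-diagonal if no diagonal variable occurs in it. -/
def MonOffDiag (m : (ℕ × ℕ) →₀ ℕ) : Prop := ∀ v : ℕ × ℕ, v.1 = v.2 → m v = 0

/-- A polynomial is off-diagonal if all monomials in its support are. -/
def POffDiag (p : MvPolynomial (ℕ × ℕ) ℤ) : Prop := ∀ m ∈ p.support, MonOffDiag m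

lemma POffDiag.zero : POffDiag 0 := by
  intro m hm
  simp at hm

lemma POffDiag.one : POffDiag 1 := by
  intro m hm
  classical
  rw [MvPolynomial.mem_support_iff, MvPolynomial.coeff_one] at hm
  have : m = 0 := by by_contra h; simp [Ne.symm h] at hm
  subst this
  intro v _
  simp

lemma POffDiag.add {p q : MvPolynomial (ℕ × ℕ) ℤ} (hp : POffDiag p) (hq : POffDiag q) :
    POffDiag (p + q) := by
  classical
  intro m hm
  rcases Finset.mem_union.mp (MvPolynomial.support_add hm) with h | h
  · exact hp m h
  · exact hq m h

lemma POffDiag.mul {p q : MvPolynomial (ℕ × ℕ) ℤ} (hp : POffDiag p) (hq : POffDiag q) :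
    POffDiag (p * q) := by
  classical
  intro m hm
  obtain ⟨m₁, hm₁, m₂, hm₂, rfl⟩ := Finset.mem_add.mp (MvPolynomial.support_mul p q hm)
  intro v hv
  simp [Finsupp.add_apply, hp m₁ hm₁ v hv, hq m₂ hm₂ v hv]

lemma POffDiag.X {i j : ℕ} (h : i ≠ j) : POffDiag (MvPolynomial.X (i, j)) := by
  intro m hm
  rw [MvPolynomial.support_X, Finset.mem_singleton] at hm
  subst hm
  intro v hv
  refine Finsupp.single_eq_of_ne ?_
  rintro rfl
  exact h hv

lemma pathProd_offdiag : ∀ (l : List ℕ) (i j : ℕ),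
    List.Chain' (· ≠ ·) (i :: (l ++ [j])) → POffDiag (pathProd Bcomm i j l)
  | [], i, j, h => by
    have : i ≠ j := (List.isChain_cons_cons.mp h).1
    exact POffDiag.X this
  | (a :: l), i, j, h => by
    unfold List.Chain' at h
    rw [List.cons_append, List.isChain_cons_cons] at h
    exact POffDiag.mul (POffDiag.X h.1) (pathProd_offdiag l a j h.2)

lemma adm_chain {n : ℕ} {l : List ℕ} (h : IsAdmissible l) (hb : ∀ x ∈ l, x < n)
    (hne : l ≠ []) : List.Chain' (· ≠ ·) (n :: (l ++ [n])) := by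
  unfold List.Chain'
  rw [show n :: (l ++ [n]) = (n :: l) ++ [n] from rfl, List.isChain_append]
  refine ⟨?_, List.isChain_singleton n, ?_⟩
  · rw [List.isChain_cons]
    refine ⟨fun y hy => ?_, h.chain'⟩
    have := hb y (List.mem_of_mem_head? hy)
    omega
  · intro x hx y hy
    have hy' : n = y := by simpa using hy
    subst hy'
    cases l with
    | nil => exact absurd rfl hne
    | cons a t =>
      rw [List.getLast?_cons_cons] at hx
      obtain ⟨hne', rfl⟩ := List.mem_getLast?_eq_getLast hx
      have := hb _ (List.getLast_mem hne')
      omega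

/-- Structure of `1 + C_{n,n}`: it is `B_{n,n}` plus an off-diagonal polynomial. -/
lemma C_diag_structure (n : ℕ) :
    ∃ R : MvPolynomial (ℕ × ℕ) ℤ,
      1 + Cpoly Bcomm n n = MvPolynomial.X (n, n) + R ∧ POffDiag R := by
  classical
  have hfin := Dset_finite n
  have h0 : Cpoly Bcomm n n = ∑ l ∈ hfin.toFinset, pathProd Bcomm n n l := by
    rw [Cpoly, if_pos rfl, Mpoly, min_self]
    exact finsum_mem_eq_finite_toFinset_sum _ hfin
  have hnil : [] ∈ hfin.toFinset := hfin.mem_toFinset.mpr (nil_mem_Dset n)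
  refine ⟨1 + ∑ l ∈ hfin.toFinset.erase [], pathProd Bcomm n n l, ?_, ?_⟩
  · rw [h0, ← Finset.add_sum_erase _ _ hnil]
    show 1 + (pathProd Bcomm n n [] + _) = _
    rw [show pathProd Bcomm n n [] = MvPolynomial.X (n, n) from rfl]
    ring
  · refine POffDiag.add POffDiag.one ?_
    refine Finset.sum_induction _ POffDiag (fun _ _ => POffDiag.add) POffDiag.zero ?_
    intro l hl
    rw [Finset.mem_erase, hfin.mem_toFinset] at hl
    obtain ⟨hlne, hadm, hbd⟩ := hl
    exact pathProd_offdiag l n n (adm_chain hadm (fun x hx => (hbd x hx).2) hlne)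

/-- for any monomial order in which every monomial divisible by a diagonal
variable is greater than every monomial in the off-diagonal variables, the polynomials
`1 + C_{n,n}`, `n = 1, …, q`, form a Gröbner basis of the ideal they generate:
the leading monomial of `1 + C_{n,n}` is `B_{n,n}`, and the leading monomial of any
nonzero element of the ideal is divisible by some `B_{n,n}`. -/
theorem C_diag_groebner_basis (q : ℕ) (hq : 1 ≤ q)
    (lt : ((ℕ × ℕ) →₀ ℕ) → ((ℕ × ℕ) →₀ ℕ) → Prop)
    (hlin : IsStrictTotalOrder ((ℕ × ℕ) →₀ ℕ) lt)
    (hwf : WellFounded lt)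
    (hadd : ∀ a b c : (ℕ × ℕ) →₀ ℕ, lt a b → lt (a + c) (b + c))
    (hdiag : ∀ m m' : (ℕ × ℕ) →₀ ℕ,
      (∃ v : ℕ × ℕ, v.1 = v.2 ∧ m v ≠ 0) →
      (∀ v : ℕ × ℕ, v.1 = v.2 → m' v = 0) → lt m' m) :
    (∀ n : ℕ, 1 ≤ n → n ≤ q →
      Finsupp.single ((n, n) : ℕ × ℕ) 1 ∈ (1 + Cpoly Bcomm n n).support ∧
      ∀ m ∈ (1 + Cpoly Bcomm n n).support,
        m ≠ Finsupp.single ((n, n) : ℕ × ℕ) 1 →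
          lt m (Finsupp.single ((n, n) : ℕ × ℕ) 1)) ∧
    (∀ f ∈ Ideal.span ((fun n : ℕ => 1 + Cpoly Bcomm n n) '' Set.Icc 1 q), f ≠ 0 →
      ∀ lm ∈ f.support, (∀ m ∈ f.support, m ≠ lm → lt m lm) →
        ∃ n : ℕ, 1 ≤ n ∧ n ≤ q ∧ lm (n, n) ≠ 0) := by
  classical
  haveI := hlin
  have htrans : ∀ {a b c : (ℕ × ℕ) →₀ ℕ}, lt a b → lt b c → lt a c :=
    fun {a b c} h1 h2 => IsTrans.trans a b c h1 h2
  have hirr : ∀ a : (ℕ × ℕ) →₀ ℕ, ¬ lt a a := fun a => Std.Irrefl.irrefl a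
  -- the reflexive closure of `lt`
  set le : ((ℕ × ℕ) →₀ ℕ) → ((ℕ × ℕ) →₀ ℕ) → Prop := fun a b => lt a b ∨ a = b with hle_def
  have hle_add : ∀ a b c d : (ℕ × ℕ) →₀ ℕ, le a b → le c d → le (a + c) (b + d) := by
    rintro a b c d (h1 | rfl) (h2 | rfl)
    · exact Or.inl (htrans (hadd a b c h1) (by rw [add_comm b c, add_comm b d]; exact hadd c d b h2))
    · exact Or.inl (hadd a b c h1)
    · exact Or.inl (by rw [add_comm a c, add_comm a d]; exact hadd c d a h2)
    · exact Or.inr rfl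
  -- off-diagonal monomials are below the diagonal singletons
  have hbelow : ∀ (n : ℕ) (m : (ℕ × ℕ) →₀ ℕ), MonOffDiag m →
      lt m (Finsupp.single ((n, n) : ℕ × ℕ) 1) :=
    fun n m hm => hdiag _ m ⟨(n, n), rfl, by simp⟩ hm
  choose R hR hRoff using C_diag_structure
  -- Part 1
  have part1 : ∀ n : ℕ, 1 ≤ n → n ≤ q →
      Finsupp.single ((n, n) : ℕ × ℕ) 1 ∈ (1 + Cpoly Bcomm n n).support ∧
      ∀ m ∈ (1 + Cpoly Bcomm n n).support,
        m ≠ Finsupp.single ((n, n) : ℕ × ℕ) 1 →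
          lt m (Finsupp.single ((n, n) : ℕ × ℕ) 1) := by
    intro n _ _
    rw [hR n]
    constructor
    · rw [MvPolynomial.mem_support_iff, MvPolynomial.coeff_add]
      have hX : MvPolynomial.coeff (Finsupp.single ((n, n) : ℕ × ℕ) 1)
          (MvPolynomial.X (n, n) : MvPolynomial (ℕ × ℕ) ℤ) = 1 := MvPolynomial.coeff_X_same _
      have hc : MvPolynomial.coeff (Finsupp.single ((n, n) : ℕ × ℕ) 1) (R n) = 0 := by
        by_contra h
        have := hRoff n _ (MvPolynomial.mem_support_iff.mpr h) (n, n) rfl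
        simp at this
      rw [hX, hc]
      norm_num
    · intro m hm hne
      have hmem : m ∈ (R n).support := by
        rcases Finset.mem_union.mp (MvPolynomial.support_add hm) with h | h
        · rw [MvPolynomial.support_X, Finset.mem_singleton] at h
          exact absurd h hne
        · exact h
      exact hbelow n m (hRoff n m hmem)
  refine ⟨part1, ?_⟩
  -- Part 2: the substitution homomorphism
  set σf : ℕ × ℕ → MvPolynomial (ℕ × ℕ) ℤ :=
    fun v => if v.1 = v.2 ∧ 1 ≤ v.1 ∧ v.1 ≤ q then - R v.1 else MvPolynomial.X v with hσf
  set φ : MvPolynomial (ℕ × ℕ) ℤ →ₐ[ℤ] MvPolynomial (ℕ × ℕ) ℤ := MvPolynomial.aeval σf with hφ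
  -- per-variable bound
  have hvar : ∀ v : ℕ × ℕ, ∀ m ∈ (σf v).support, le m (Finsupp.single v 1) := by
    intro v m hm
    by_cases h : v.1 = v.2 ∧ 1 ≤ v.1 ∧ v.1 ≤ q
    · rw [show σf v = - R v.1 from if_pos h] at hm
      rw [MvPolynomial.support_neg] at hm
      left
      have := hbelow v.1 m (hRoff v.1 m hm)
      have hv : v = (v.1, v.1) := by
        obtain ⟨h1, -⟩ := h
        exact Prod.ext rfl h1.symm
      rw [hv]
      exact this
    · rw [show σf v = MvPolynomial.X v from if_neg h, MvPolynomial.support_X,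
        Finset.mem_singleton] at hm
      exact Or.inr hm
  -- product bound
  have hmul : ∀ (p p' : MvPolynomial (ℕ × ℕ) ℤ) (a b : (ℕ × ℕ) →₀ ℕ),
      (∀ m ∈ p.support, le m a) → (∀ m ∈ p'.support, le m b) →
      ∀ m ∈ (p * p').support, le m (a + b) := by
    intro p p' a b hp hp' m hm
    obtain ⟨m₁, hm₁, m₂, hm₂, rfl⟩ := Finset.mem_add.mp (MvPolynomial.support_mul p p' hm)
    exact hle_add _ _ _ _ (hp m₁ hm₁) (hp' m₂ hm₂)
  -- power bound
  have hpow : ∀ (v : ℕ × ℕ) (k : ℕ), ∀ m ∈ (σf v ^ k).support,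
      le m (Finsupp.single v k) := by
    intro v k
    induction k with
    | zero =>
      intro m hm
      rw [pow_zero, MvPolynomial.mem_support_iff, MvPolynomial.coeff_one] at hm
      have : m = 0 := by by_contra h; simp [Ne.symm h] at hm
      subst this
      exact Or.inr (by simp)
    | succ k IH =>
      intro m hm
      rw [pow_succ] at hm
      have := hmul (σf v ^ k) (σf v) (Finsupp.single v k) (Finsupp.single v 1)
        IH (hvar v) m hm
      rwa [← Finsupp.single_add] at this
  -- finset product bound
  have hprod : ∀ (s : Finset (ℕ × ℕ)) (g : ℕ × ℕ → MvPolynomial (ℕ × ℕ) ℤ)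
      (b : (ℕ × ℕ) → ((ℕ × ℕ) →₀ ℕ)),
      (∀ v ∈ s, ∀ m ∈ (g v).support, le m (b v)) →
      ∀ m ∈ (∏ v ∈ s, g v).support, le m (∑ v ∈ s, b v) := by
    intro s
    induction s using Finset.induction_on with
    | empty =>
      intro g b _ m hm
      rw [Finset.prod_empty, MvPolynomial.mem_support_iff, MvPolynomial.coeff_one] at hm
      have : m = 0 := by by_contra h; simp [Ne.symm h] at hm
      subst this
      exact Or.inr (by simp)
    | @insert v s' hvs IH =>
      intro g b hg m hm
      rw [Finset.prod_insert hvs] at hm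
      rw [Finset.sum_insert hvs]
      exact hmul _ _ _ _ (hg v (Finset.mem_insert_self v s'))
        (IH g b fun w hw => hg w (Finset.mem_insert_of_mem hw)) m hm
  -- bound on images of monomials
  have hmono : ∀ (m : (ℕ × ℕ) →₀ ℕ) (c : ℤ), ∀ m' ∈ (φ (MvPolynomial.monomial m c)).support,
      le m' m := by
    intro m c m' hm'
    rw [hφ, MvPolynomial.aeval_monomial] at hm'
    have hCsupp : ∀ m'' ∈ (algebraMap ℤ (MvPolynomial (ℕ × ℕ) ℤ) c).support, le m'' 0 := by
      intro m'' hm''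
      rw [MvPolynomial.algebraMap_eq, MvPolynomial.mem_support_iff, MvPolynomial.coeff_C] at hm''
      have : m'' = 0 := by by_contra h; simp [Ne.symm h] at hm''
      exact Or.inr this
    have hPsupp : ∀ m'' ∈ (m.prod fun v k => σf v ^ k).support,
        le m'' (∑ v ∈ m.support, Finsupp.single v (m v)) := by
      rw [Finsupp.prod]
      refine hprod m.support _ (fun v => Finsupp.single v (m v)) ?_
      intro v hv m'' hm''
      exact hpow v (m v) m'' hm''
    have := hmul _ _ _ _ hCsupp hPsupp m' hm'
    rwa [zero_add, show (∑ v ∈ m.support, Finsupp.single v (m v)) = m from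
      (Finsupp.sum_single m)] at this
  -- exactness on monomials avoiding the diagonal variables in range
  have heq : ∀ (m : (ℕ × ℕ) →₀ ℕ) (c : ℤ), (∀ n : ℕ, 1 ≤ n → n ≤ q → m (n, n) = 0) →
      φ (MvPolynomial.monomial m c) = MvPolynomial.monomial m c := by
    intro m c hm
    rw [hφ, MvPolynomial.aeval_monomial]
    have : (m.prod fun v k => σf v ^ k) = m.prod fun v k => (MvPolynomial.X v) ^ k := by
      refine Finsupp.prod_congr ?_
      intro v hv
      congr 1
      refine show σf v = MvPolynomial.X v from if_neg ?_
      rintro ⟨h1, h2, h3⟩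
      have hv' : v = (v.1, v.1) := Prod.ext rfl h1.symm
      have : m v = 0 := by rw [hv']; exact hm v.1 h2 h3
      exact (Finsupp.mem_support_iff.mp hv) this
    rw [this, MvPolynomial.algebraMap_eq, ← MvPolynomial.monomial_eq]
  -- φ kills the generators
  have hker : ∀ n : ℕ, 1 ≤ n → n ≤ q → φ (1 + Cpoly Bcomm n n) = 0 := by
    intro n h1 h2
    have hXval : φ (MvPolynomial.X (n, n)) = - R n := by
      rw [hφ, MvPolynomial.aeval_X]
      exact show σf (n, n) = - R (n, n).1 from if_pos ⟨rfl, h1, h2⟩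
    have hRval : φ (R n) = R n := by
      conv_lhs => rw [← MvPolynomial.support_sum_monomial_coeff (R n)]
      rw [map_sum]
      rw [Finset.sum_congr rfl fun m hm => heq m _ fun k _ _ => hRoff n m hm (k, k) rfl]
      exact MvPolynomial.support_sum_monomial_coeff (R n)
    rw [hR n, map_add, hXval, hRval]
    ring
  -- conclusion
  intro f hf hf0 lm hlm hmax
  by_contra hcon
  push_neg at hcon
  have hφf : φ f = 0 := by
    have hle : Ideal.span ((fun n : ℕ => 1 + Cpoly Bcomm n n) '' Set.Icc 1 q) ≤
        RingHom.ker (φ : MvPolynomial (ℕ × ℕ) ℤ →+* MvPolynomial (ℕ × ℕ) ℤ) := by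
      rw [Ideal.span_le]
      rintro _ ⟨n, hn, rfl⟩
      exact hker n hn.1 hn.2
    exact hle hf
  have hcoeff : MvPolynomial.coeff lm (φ f) = MvPolynomial.coeff lm f := by
    conv_lhs => rw [← MvPolynomial.support_sum_monomial_coeff f]
    rw [map_sum, MvPolynomial.coeff_sum]
    rw [Finset.sum_eq_single lm]
    · rw [heq lm _ hcon, MvPolynomial.coeff_monomial, if_pos rfl]
    · intro m hm hne
      by_contra h0
      have hmem : lm ∈ (φ (MvPolynomial.monomial m (MvPolynomial.coeff m f))).support :=
        MvPolynomial.mem_support_iff.mpr h0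
      have h1 := hmono m _ lm hmem
      have h2 := hmax m hm hne
      rcases h1 with h1 | h1
      · exact hirr lm (htrans h1 h2)
      · exact hne h1.symm
    · intro h
      exact absurd hlm h
  rw [hφf] at hcoeff
  simp only [MvPolynomial.coeff_zero] at hcoeff
  exact (MvPolynomial.mem_support_iff.mp hlm) hcoeff.symm
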